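/- Let n ≥ 3 be an integer and p > 3 a prime with p ≡ 1 (mod n), and set m = (p−1)/n. Then ∑_{k=0}^{p−1} C(m+k, m)^n · ∑_{j=1}^k 1/j² ≡ 0 (mod p), as a congruence of p-integral rationals. -/

import Mathlib

open Finset Polynomial

namespace HSRV

variable {p : ℕ} [hp : Fact p.Prime]

/-- partial sums of `j ^ (p-3)` -/
noncomputable def Hf (p k : ℕ) : ZMod p := ∑ j ∈ range (k + 1), (j : ZMod p) ^ (p - 3)

/-- the same, as a function on `ZMod p` -/
noncomputable def Hb (p : ℕ) [NeZero p] (x : ZMod p) : ZMod p := Hf p x.val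

lemma sum_univ_pow_eq_zero (e : ℕ) (he : e < p - 1) :
    ∑ x : ZMod p, x ^ e = 0 := by
  have := FiniteField.sum_pow_lt_card_sub_one (K := ZMod p) e (by rwa [ZMod.card])
  exact this

lemma sum_range_cast (g : ZMod p → ZMod p) :
    ∑ j ∈ range p, g (j : ZMod p) = ∑ x : ZMod p, g x := by
  haveI : NeZero p := ⟨hp.out.ne_zero⟩
  refine Finset.sum_nbij' (fun j => (j : ZMod p)) (fun x => x.val) ?_ ?_ ?_ ?_ ?_
  · intro a _; exact mem_univ _
  · intro x _; exact mem_range.2 x.val_lt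
  · intro a ha; exact ZMod.val_cast_of_lt (mem_range.1 ha)
  · intro x _; exact ZMod.natCast_zmod_val x
  · intro a _; rfl

lemma sum_eval_eq_zero (Q : Polynomial (ZMod p)) (hQ : Q.natDegree < p - 1) :
    ∑ x : ZMod p, Q.eval x = 0 := by
  have h : ∀ x : ZMod p, Q.eval x =
      ∑ e ∈ range (Q.natDegree + 1), Q.coeff e * x ^ e := by
    intro x; exact eval_eq_sum_range x
  calc ∑ x : ZMod p, Q.eval x
      = ∑ x : ZMod p, ∑ e ∈ range (Q.natDegree + 1), Q.coeff e * x ^ e := by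
        exact Finset.sum_congr rfl fun x _ => h x
    _ = ∑ e ∈ range (Q.natDegree + 1), ∑ x : ZMod p, Q.coeff e * x ^ e :=
        Finset.sum_comm
    _ = 0 := by
        refine Finset.sum_eq_zero fun e hee => ?_
        rw [← Finset.mul_sum, sum_univ_pow_eq_zero e (lt_of_le_of_lt
          (Nat.lt_succ_iff.mp (mem_range.1 hee)) hQ), mul_zero]

lemma Hf_last (hp5 : 5 ≤ p) : Hf p (p - 1) = 0 := by
  unfold Hf
  have h1 : p - 1 + 1 = p := by omega
  rw [h1, sum_range_cast (fun x => x ^ (p - 3))]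
  exact sum_univ_pow_eq_zero (p - 3) (by omega)

lemma Hf_eq_Icc (hp5 : 5 ≤ p) (k : ℕ) :
    Hf p k = ∑ j ∈ Icc 1 k, (j : ZMod p) ^ (p - 3) := by
  induction k with
  | zero => simp [Hf, zero_pow (show p - 3 ≠ 0 by omega)]
  | succ k ih =>
      rw [Hf, Finset.sum_range_succ, ← Hf, ih,
        Finset.sum_Icc_succ_top (by omega : 1 ≤ k + 1)]

lemma Hb_add_one (hp5 : 5 ≤ p) (x : ZMod p) :
    Hb p (x + 1) = Hb p x + (x + 1) ^ (p - 3) := by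
  haveI : NeZero p := ⟨hp.out.ne_zero⟩
  haveI : Fact (1 < p) := ⟨by omega⟩
  by_cases hx : x = -1
  · subst hx
    have h0 : Hb p ((-1 : ZMod p) + 1) = 0 := by
      rw [neg_add_cancel]
      simp [Hb, Hf, ZMod.val_zero, zero_pow (show p - 3 ≠ 0 by omega)]
    have hm1v : (-1 : ZMod p).val = p - 1 := by
      obtain ⟨q, rfl⟩ : ∃ q, p = q.succ := ⟨p - 1, by omega⟩
      simp [ZMod.val_neg_one q]
    have hm1 : Hb p (-1 : ZMod p) = 0 := by
      rw [Hb, hm1v, Hf_last hp5]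
    rw [h0, hm1, neg_add_cancel, zero_pow (show p - 3 ≠ 0 by omega), add_zero]
  · have hval : x.val < p - 1 := by
      have h1 := x.val_lt
      rcases Nat.lt_or_ge x.val (p - 1) with h | h
      · exact h
      · exfalso; apply hx
        have hv : x.val = p - 1 := by omega
        have h2 : ((x.val : ℕ) : ZMod p) = x := ZMod.natCast_zmod_val x
        rw [hv] at h2
        rw [← h2, Nat.cast_sub (by omega : 1 ≤ p), ZMod.natCast_self]
        ring
    have hv1 : (x + 1).val = x.val + 1 := by
      rw [ZMod.val_add, ZMod.val_one, Nat.mod_eq_of_lt (by omega)]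
    show Hf p ((x + 1).val) = Hf p x.val + (x + 1) ^ (p - 3)
    rw [hv1, Hf, Finset.sum_range_succ, ← Hf]
    congr 1
    have h3 : ((x.val + 1 : ℕ) : ZMod p) = x + 1 := by
      push_cast [ZMod.natCast_zmod_val]; ring
    rw [h3]

lemma Hb_add_nat (hp5 : 5 ≤ p) (x : ZMod p) (a : ℕ) :
    Hb p (x + (a : ZMod p)) = Hb p x + ∑ i ∈ Icc 1 a, (x + (i : ZMod p)) ^ (p - 3) := by
  induction a with
  | zero => simp
  | succ a ih =>
      have h1 : ((a + 1 : ℕ) : ZMod p) = ((a : ℕ) : ZMod p) + 1 := by push_cast; ring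
      rw [h1, ← add_assoc, Hb_add_one hp5, ih,
        Finset.sum_Icc_succ_top (by omega : 1 ≤ a + 1)]
      push_cast
      ring

lemma Hb_reflect (hp5 : 5 ≤ p) (x : ZMod p) :
    Hb p (-1 - x) = - Hb p x := by
  haveI : NeZero p := ⟨hp.out.ne_zero⟩
  have hodd : Odd p := hp.out.odd_of_ne_two (by omega)
  have heven : Even (p - 3) := Nat.Odd.sub_odd hodd (by decide)
  set k := x.val with hk
  have hklt : k < p := x.val_lt
  have hx : ((k : ℕ) : ZMod p) = x := ZMod.natCast_zmod_val x
  have h2 : ((p - 1 : ℕ) : ZMod p) = -1 := by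
    rw [Nat.cast_sub (by omega : 1 ≤ p), ZMod.natCast_self]; ring
  have hneg : (-1 - x) = ((p - 1 - k : ℕ) : ZMod p) := by
    rw [Nat.cast_sub (by omega : k ≤ p - 1), h2, hx]
  have hvneg : (-1 - x).val = p - 1 - k := by
    rw [hneg, ZMod.val_cast_of_lt (by omega)]
  show Hf p ((-1 - x).val) = - Hf p k
  rw [hvneg]
  have hre : ∑ j ∈ Ico (p - k) p, (j : ZMod p) ^ (p - 3) = Hf p k := by
    rw [Hf_eq_Icc hp5]
    refine Finset.sum_nbij' (fun j => p - j) (fun i => p - i) ?_ ?_ ?_ ?_ ?_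
    · intro j hj
      simp only [Finset.mem_Ico] at hj
      simp only [Finset.mem_Icc]
      omega
    · intro i hi
      simp only [Finset.mem_Icc] at hi
      simp only [Finset.mem_Ico]
      omega
    · intro j hj
      simp only [Finset.mem_Ico] at hj
      show p - (p - j) = j
      omega
    · intro i hi
      simp only [Finset.mem_Icc] at hi
      show p - (p - i) = i
      omega
    · intro j hj
      simp only [Finset.mem_Ico] at hj
      have hcast : ((p - j : ℕ) : ZMod p) = - (j : ZMod p) := by
        rw [Nat.cast_sub (by omega : j ≤ p), ZMod.natCast_self]; ring
      rw [hcast, Even.neg_pow heven]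
  have hsplit : Hf p (p - 1) =
      Hf p (p - 1 - k) + ∑ j ∈ Ico (p - k) p, (j : ZMod p) ^ (p - 3) := by
    unfold Hf
    rw [Finset.range_eq_Ico]
    have e1 : p - 1 + 1 = p := by omega
    have e2 : p - 1 - k + 1 = p - k := by omega
    rw [e1, e2, Finset.range_eq_Ico]
    exact (Finset.sum_Ico_consecutive (fun j : ℕ => (j : ZMod p) ^ (p - 3)) (m := 0) (n := p - k) (k := p) (by omega) (by omega)).symm
  have key : Hf p (p - 1 - k) + Hf p k = 0 := by
    rw [← Hf_last hp5, hsplit, hre]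
  linear_combination key


lemma sum_Fe_weighted (hp5 : 5 ≤ p) {m n : ℕ} (hn : 3 ≤ n) (hmn : m * n = p - 1)
    {i : ℕ} (hi : i ∈ Icc 1 m) :
    ∑ x : ZMod p, (∏ j ∈ Icc 1 m, (x + (j : ZMod p))) ^ n * (x + (i : ZMod p)) ^ (p - 3)
      = 0 := by
  haveI : NeZero p := ⟨hp.out.ne_zero⟩
  have hm1 : 1 ≤ m := by
    rcases Nat.eq_zero_or_pos m with h | h
    · exfalso; rw [h, zero_mul] at hmn; omega
    · exact h
  set c : ZMod p := (i : ZMod p) with hc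
  set Gi : ZMod p → ZMod p :=
    fun x => (x + c) ^ (n - 2) * ∏ j ∈ (Icc 1 m).erase i, (x + (j : ZMod p)) ^ n with hGi
  have hexp : n + (p - 3) = (n - 2) + (p - 1) := by omega
  have key : ∀ x : ZMod p,
      (∏ j ∈ Icc 1 m, (x + (j : ZMod p))) ^ n * (x + c) ^ (p - 3)
        = Gi x * (x + c) ^ (p - 1) := by
    intro x
    rw [← Finset.prod_pow,
      ← Finset.mul_prod_erase (Icc 1 m) (fun j => (x + (j : ZMod p)) ^ n) hi]
    simp only [hGi]
    calc (x + c) ^ n * (∏ j ∈ (Icc 1 m).erase i, (x + (j : ZMod p)) ^ n) * (x + c) ^ (p - 3)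
        = (∏ j ∈ (Icc 1 m).erase i, (x + (j : ZMod p)) ^ n) * (x + c) ^ (n + (p - 3)) := by
          rw [pow_add]; ring
      _ = _ := by rw [hexp, pow_add]; ring
  rw [Finset.sum_congr rfl fun x _ => key x]
  have hsplit : ∀ x : ZMod p,
      Gi x * (x + c) ^ (p - 1) = Gi x - (if x = -c then Gi x else 0) := by
    intro x
    by_cases hx : x = -c
    · subst hx
      rw [if_pos rfl, neg_add_cancel, zero_pow (by omega : p - 1 ≠ 0), mul_zero, sub_self]
    · have hne : x + c ≠ 0 := fun h => hx (by linear_combination h)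
      rw [if_neg hx, ZMod.pow_card_sub_one_eq_one hne, mul_one, sub_zero]
  rw [Finset.sum_congr rfl fun x _ => hsplit x, Finset.sum_sub_distrib,
    Finset.sum_ite_eq' Finset.univ (-c) Gi, if_pos (mem_univ _)]
  have hGi0 : Gi (-c) = 0 := by
    simp only [hGi, neg_add_cancel, zero_pow (by omega : n - 2 ≠ 0), zero_mul]
  rw [hGi0, sub_zero]
  -- now ∑ Gi x = 0 via polynomial degree count
  set Q : Polynomial (ZMod p) :=
    (X + C c) ^ (n - 2) * ∏ j ∈ (Icc 1 m).erase i, (X + C ((j : ℕ) : ZMod p)) ^ n with hQ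
  have hev : ∀ x : ZMod p, Gi x = Q.eval x := by
    intro x
    simp [hQ, hGi, eval_prod]
  rw [Finset.sum_congr rfl fun x _ => hev x]
  refine sum_eval_eq_zero Q ?_
  have h1 : ((X + C c) ^ (n - 2) : Polynomial (ZMod p)).natDegree = n - 2 := by
    rw [(monic_X_add_C c).natDegree_pow, natDegree_X_add_C, mul_one]
  have h2 : (∏ j ∈ (Icc 1 m).erase i,
      ((X + C ((j : ℕ) : ZMod p)) ^ n : Polynomial (ZMod p))).natDegree ≤ (m - 1) * n := by
    refine le_trans (Polynomial.natDegree_prod_le _ _) ?_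
    have hdeg : ∀ j ∈ (Icc 1 m).erase i,
        ((X + C ((j : ℕ) : ZMod p)) ^ n : Polynomial (ZMod p)).natDegree = n := by
      intro j _
      rw [(monic_X_add_C _).natDegree_pow, natDegree_X_add_C, mul_one]
    rw [Finset.sum_congr rfl hdeg, Finset.sum_const, Finset.card_erase_of_mem hi,
      Nat.card_Icc, smul_eq_mul]
    have : m + 1 - 1 - 1 = m - 1 := by omega
    rw [this]
  have hq : Q.natDegree ≤ (n - 2) + (m - 1) * n := by
    refine le_trans (natDegree_mul_le) ?_
    rw [h1]
    exact Nat.add_le_add_left h2 _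
  have hmn' : (m - 1) * n = m * n - n := by rw [Nat.sub_mul, one_mul]
  have hnm : n ≤ m * n := Nat.le_mul_of_pos_left n (by omega)
  omega

lemma T_eq_zero (hp5 : 5 ≤ p) {m n : ℕ} (hn : 3 ≤ n) (hmn : m * n = p - 1) :
    ∑ x : ZMod p, (∏ j ∈ Icc 1 m, (x + (j : ZMod p))) ^ n * Hb p x = 0 := by
  haveI : NeZero p := ⟨hp.out.ne_zero⟩
  have hm1 : 1 ≤ m := by
    rcases Nat.eq_zero_or_pos m with h | h
    · exfalso; rw [h, zero_mul] at hmn; omega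
    · exact h
  have heven : Even (m * n) := by
    rw [hmn]
    have hodd : Odd p := hp.out.odd_of_ne_two (by omega)
    exact Nat.Odd.sub_odd hodd (by decide)
  set Fe : ZMod p → ZMod p := fun x => (∏ j ∈ Icc 1 m, (x + (j : ZMod p))) ^ n with hFe
  set Ge : ZMod p → ZMod p :=
    fun x => (∏ j ∈ Icc 1 m, (x - (m : ZMod p) + (j : ZMod p))) ^ n with hGe
  have hFeGe : ∀ x : ZMod p, Fe (-1 - x) = Ge x := by
    intro x
    simp only [hFe, hGe]
    have hre : ∏ j ∈ Icc 1 m, (x + 1 - (j : ZMod p)) ^ n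
        = ∏ j ∈ Icc 1 m, (x - (m : ZMod p) + (j : ZMod p)) ^ n := by
      refine Finset.prod_nbij' (fun j => m + 1 - j) (fun j => m + 1 - j) ?_ ?_ ?_ ?_ ?_
      · intro j hj; simp only [Finset.mem_Icc] at *; omega
      · intro j hj; simp only [Finset.mem_Icc] at *; omega
      · intro j hj
        simp only [Finset.mem_Icc] at hj
        show m + 1 - (m + 1 - j) = j
        omega
      · intro j hj
        simp only [Finset.mem_Icc] at hj
        show m + 1 - (m + 1 - j) = j
        omega
      · intro j hj
        simp only [Finset.mem_Icc] at hj
        congr 1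
        have hcast : ((m + 1 - j : ℕ) : ZMod p) = (m : ZMod p) + 1 - (j : ZMod p) := by
          rw [Nat.cast_sub (by omega : j ≤ m + 1)]
          push_cast; ring
        rw [hcast]; ring
    calc (∏ j ∈ Icc 1 m, (-1 - x + (j : ZMod p))) ^ n
        = ∏ j ∈ Icc 1 m, (-1 - x + (j : ZMod p)) ^ n := by rw [Finset.prod_pow]
      _ = ∏ j ∈ Icc 1 m, ((-1) ^ n * (x + 1 - (j : ZMod p)) ^ n) := by
          refine Finset.prod_congr rfl fun j _ => ?_
          rw [← neg_pow]
          congr 1; ring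
      _ = ((-1 : ZMod p) ^ n) ^ m * ∏ j ∈ Icc 1 m, (x + 1 - (j : ZMod p)) ^ n := by
          have hmm : m + 1 - 1 = m := by omega
          rw [Finset.prod_mul_distrib, Finset.prod_const, Nat.card_Icc, hmm]
      _ = ∏ j ∈ Icc 1 m, (x + 1 - (j : ZMod p)) ^ n := by
          have hone : ((-1 : ZMod p) ^ n) ^ m = 1 := by
            rw [← pow_mul]
            exact Even.neg_one_pow (by rwa [mul_comm] at heven)
          rw [hone, one_mul]
      _ = _ := by rw [hre, Finset.prod_pow]
  set T := ∑ x : ZMod p, Fe x * Hb p x with hT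
  show T = 0
  have step1 : T = ∑ x : ZMod p, Ge x * (- Hb p x) := by
    rw [hT]
    refine (Fintype.sum_equiv (Equiv.subLeft (-1 : ZMod p))
      (fun x => Ge x * (- Hb p x)) (fun y => Fe y * Hb p y) ?_).symm
    intro x
    show Ge x * (- Hb p x) = Fe (-1 - x) * Hb p (-1 - x)
    rw [hFeGe x, Hb_reflect hp5 x]
  have hGeFe : ∀ x : ZMod p, Ge (x + (m : ZMod p)) = Fe x := by
    intro x
    simp only [hGe, hFe]
    congr 1
    exact Finset.prod_congr rfl fun j _ => by ring
  have step2 : ∑ x : ZMod p, Ge x * Hb p x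
      = T + ∑ i ∈ Icc 1 m, ∑ x : ZMod p, Fe x * (x + (i : ZMod p)) ^ (p - 3) := by
    have hshift := Fintype.sum_equiv (Equiv.addRight ((m : ℕ) : ZMod p))
      (fun x => Ge (x + (m : ZMod p)) * Hb p (x + (m : ZMod p)))
      (fun y => Ge y * Hb p y) (fun x => rfl)
    rw [← hshift]
    calc ∑ x : ZMod p, Ge (x + (m : ZMod p)) * Hb p (x + (m : ZMod p))
        = ∑ x : ZMod p,
            Fe x * (Hb p x + ∑ i ∈ Icc 1 m, (x + (i : ZMod p)) ^ (p - 3)) := by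
          refine Finset.sum_congr rfl fun x _ => ?_
          rw [hGeFe x, Hb_add_nat hp5]
      _ = T + ∑ x : ZMod p, ∑ i ∈ Icc 1 m, Fe x * (x + (i : ZMod p)) ^ (p - 3) := by
          rw [hT, ← Finset.sum_add_distrib]
          refine Finset.sum_congr rfl fun x _ => ?_
          rw [mul_add, Finset.mul_sum]
      _ = _ := by rw [Finset.sum_comm]
  have hzero : ∀ i ∈ Icc 1 m, ∑ x : ZMod p, Fe x * (x + (i : ZMod p)) ^ (p - 3) = 0 :=
    fun i hi => sum_Fe_weighted hp5 hn hmn hi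
  rw [Finset.sum_congr rfl hzero, Finset.sum_const, smul_zero, add_zero] at step2
  have hTT : T = -T := by
    calc T = ∑ x : ZMod p, Ge x * (- Hb p x) := step1
      _ = -∑ x : ZMod p, Ge x * Hb p x := by
          simp only [mul_neg]
          exact Finset.sum_neg_distrib _
      _ = -T := by rw [step2]
  have h2 : (2 : ZMod p) ≠ 0 := by
    have hh : ((2 : ℕ) : ZMod p) ≠ 0 := by
      rw [Ne, ZMod.natCast_eq_zero_iff]
      intro hdvd
      have := Nat.le_of_dvd (by norm_num) hdvd
      omega
    simpa using hh
  have h2T : (2 : ZMod p) * T = 0 := by linear_combination hTT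
  rcases mul_eq_zero.mp h2T with h | h
  · exact absurd h h2
  · exact h

lemma prod_asc (k m : ℕ) :
    k.factorial * ∏ j ∈ Icc 1 m, (k + j) = (m + k).factorial := by
  induction m with
  | zero => simp
  | succ m ih =>
      rw [Finset.prod_Icc_succ_top (by omega : 1 ≤ m + 1), ← mul_assoc, ih]
      have h1 : m + 1 + k = (m + k) + 1 := by omega
      rw [h1, Nat.factorial_succ]
      ring

lemma choose_eq_prod (k m : ℕ) :
    (m + k).choose m * m.factorial = ∏ j ∈ Icc 1 m, (k + j) := by
  have h1 := Nat.choose_mul_factorial_mul_factorial (Nat.le_add_right m k)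
  have h2 : m + k - m = k := by omega
  rw [h2] at h1
  have h3 := prod_asc k m
  have h4 : (m + k).choose m * m.factorial * k.factorial
      = (∏ j ∈ Icc 1 m, (k + j)) * k.factorial := by
    rw [h1, ← h3]; ring
  exact Nat.eq_of_mul_eq_mul_right (Nat.factorial_pos k) h4

lemma inner_sum (hp5 : 5 ≤ p) {k : ℕ} (hk : k < p) :
    ∑ j ∈ Icc 1 k, (((p - 1).factorial / j : ℕ) : ZMod p) ^ 2
      = (((p - 1).factorial : ℕ) : ZMod p) ^ 2 * Hf p k := by
  rw [Hf_eq_Icc hp5, Finset.mul_sum]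
  refine Finset.sum_congr rfl fun j hj => ?_
  simp only [Finset.mem_Icc] at hj
  have hj0 : (j : ZMod p) ≠ 0 := by
    rw [Ne, ZMod.natCast_eq_zero_iff]
    intro hd
    have := Nat.le_of_dvd (by omega) hd
    omega
  have hdvd : j ∣ (p - 1).factorial := Nat.dvd_factorial (by omega) (by omega)
  have hLj : (((p - 1).factorial / j : ℕ) : ZMod p) * (j : ZMod p)
      = (((p - 1).factorial : ℕ) : ZMod p) := by
    rw [← Nat.cast_mul, Nat.div_mul_cancel hdvd]
  have hpow : (j : ZMod p) ^ (p - 3 + 2) = 1 := by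
    have he : p - 3 + 2 = p - 1 := by omega
    rw [he]
    exact ZMod.pow_card_sub_one_eq_one hj0
  have hcancel : (((p - 1).factorial / j : ℕ) : ZMod p) ^ 2 * (j : ZMod p) ^ 2
      = ((((p - 1).factorial : ℕ) : ZMod p) ^ 2 * (j : ZMod p) ^ (p - 3)) * (j : ZMod p) ^ 2 := by
    calc (((p - 1).factorial / j : ℕ) : ZMod p) ^ 2 * (j : ZMod p) ^ 2
        = ((((p - 1).factorial / j : ℕ) : ZMod p) * (j : ZMod p)) ^ 2 := by rw [mul_pow]
      _ = (((p - 1).factorial : ℕ) : ZMod p) ^ 2 := by rw [hLj]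
      _ = (((p - 1).factorial : ℕ) : ZMod p) ^ 2 * ((j : ZMod p) ^ (p - 3) * (j : ZMod p) ^ 2) := by
          rw [← pow_add, hpow, mul_one]
      _ = _ := by ring
  exact mul_right_cancel₀ (pow_ne_zero 2 hj0) hcancel

end HSRV

/-- `∑_{k=0}^{p-1} C(m+k,m)^n ∑_{j=1}^k 1/j² ≡ 0 (mod p)`,
i.e. the `p`-adic valuation of the sum is positive. -/
theorem harmonic_square_reciprocal_vanishes_mod_p (n p m : ℕ) [Fact p.Prime]
    (hn : 3 ≤ n) (hp : 3 < p) (hpn : p ≡ 1 [MOD n]) (hm : p - 1 = m * n) :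
    ‖((∑ k ∈ Finset.range p, (Nat.choose (m + k) m : ℚ) ^ n *
        ∑ j ∈ Finset.Icc 1 k, (1 : ℚ) / (j : ℚ) ^ 2 : ℚ) : ℚ_[p])‖ ≤ (p : ℝ) ^ (-1 : ℤ) := by
  classical
  haveI : NeZero p := ⟨(Fact.out : p.Prime).ne_zero⟩
  have hp5 : 5 ≤ p := by
    have h4 : p ≠ 4 := by
      intro h
      have hprime : Nat.Prime p := Fact.out
      rw [h] at hprime
      exact absurd hprime (by decide)
    omega
  have hmn : m * n = p - 1 := hm.symm
  have hm1 : 1 ≤ m := by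
    rcases Nat.eq_zero_or_pos m with h | h
    · exfalso; rw [h, zero_mul] at hmn; omega
    · exact h
  have hmltp : m < p := by
    have h := Nat.le_mul_of_pos_right m (show 0 < n by omega)
    omega
  set L : ℕ := (p - 1).factorial with hL
  set N : ℕ := ∑ k ∈ Finset.range p,
    (m + k).choose m ^ n * ∑ j ∈ Finset.Icc 1 k, (L / j) ^ 2 with hN
  set Q : ℚ := ∑ k ∈ Finset.range p, (Nat.choose (m + k) m : ℚ) ^ n *
    ∑ j ∈ Finset.Icc 1 k, (1 : ℚ) / (j : ℚ) ^ 2 with hQ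
  -- Step 1 : Q * L^2 = N over ℚ
  have hQD : Q * ((L : ℚ)) ^ 2 = (N : ℚ) := by
    rw [hQ, hN, Finset.sum_mul]
    push_cast
    refine Finset.sum_congr rfl fun k hk => ?_
    simp only [Finset.mem_range] at hk
    rw [mul_assoc]
    congr 1
    rw [Finset.sum_mul]
    refine Finset.sum_congr rfl fun j hj => ?_
    simp only [Finset.mem_Icc] at hj
    have hjd : j ∣ L := Nat.dvd_factorial (by omega) (by omega)
    have hj0 : (j : ℚ) ≠ 0 := Nat.cast_ne_zero.mpr (by omega)
    have hjQ : ((L / j : ℕ) : ℚ) = (L : ℚ) / (j : ℚ) := Nat.cast_div hjd hj0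
    rw [hjQ, div_pow]
    field_simp
  -- Step 2 : p ∣ N
  have hNzero : (N : ZMod p) = 0 := by
    have hfac : ((m.factorial : ℕ) : ZMod p) ≠ 0 := by
      rw [Ne, ZMod.natCast_eq_zero_iff]
      intro hdvd
      have := (Nat.Prime.dvd_factorial (Fact.out)).mp hdvd
      omega
    have hT := HSRV.T_eq_zero hp5 hn hmn
    have hstep : (N : ZMod p) * ((m.factorial : ℕ) : ZMod p) ^ n
        = ((L : ℕ) : ZMod p) ^ 2 *
          ∑ x : ZMod p, (∏ j ∈ Finset.Icc 1 m, (x + (j : ZMod p))) ^ n * HSRV.Hb p x := by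
      rw [← HSRV.sum_range_cast
        (fun x => (∏ j ∈ Finset.Icc 1 m, (x + (j : ZMod p))) ^ n * HSRV.Hb p x)]
      rw [hN]
      push_cast
      rw [Finset.sum_mul, Finset.mul_sum]
      refine Finset.sum_congr rfl fun k hk => ?_
      simp only [Finset.mem_range] at hk
      have hbk : HSRV.Hb p ((k : ℕ) : ZMod p) = HSRV.Hf p k := by
        rw [HSRV.Hb, ZMod.val_cast_of_lt hk]
      have hbin : ((m + k).choose m : ZMod p) * ((m.factorial : ℕ) : ZMod p)
          = ∏ j ∈ Finset.Icc 1 m, ((k : ZMod p) + (j : ZMod p)) := by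
        have := congrArg (fun t : ℕ => (t : ZMod p)) (HSRV.choose_eq_prod k m)
        push_cast at this
        exact this
      have hinner := HSRV.inner_sum hp5 hk
      calc ((m + k).choose m : ZMod p) ^ n *
            (∑ j ∈ Finset.Icc 1 k, ((L / j : ℕ) : ZMod p) ^ 2) *
            ((m.factorial : ℕ) : ZMod p) ^ n
          = (((m + k).choose m : ZMod p) * ((m.factorial : ℕ) : ZMod p)) ^ n *
            (∑ j ∈ Finset.Icc 1 k, ((L / j : ℕ) : ZMod p) ^ 2) := by
            rw [mul_pow]; ring
        _ = (∏ j ∈ Finset.Icc 1 m, ((k : ZMod p) + (j : ZMod p))) ^ n *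
            (((L : ℕ) : ZMod p) ^ 2 * HSRV.Hf p k) := by
            rw [hbin, hinner]
        _ = ((L : ℕ) : ZMod p) ^ 2 *
            ((∏ j ∈ Finset.Icc 1 m, (((k : ℕ) : ZMod p) + (j : ZMod p))) ^ n *
              HSRV.Hb p ((k : ℕ) : ZMod p)) := by
            rw [hbk]; ring
    rw [hT, mul_zero] at hstep
    rcases mul_eq_zero.mp hstep with h | h
    · exact h
    · exact absurd (pow_eq_zero_iff (by omega : n ≠ 0) |>.mp h) hfac
  have hpdvdN : p ∣ N := by
    rwa [ZMod.natCast_eq_zero_iff] at hNzero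
  -- Step 3 : the norm estimate
  have hLne : ¬ (p : ℤ) ∣ ((L ^ 2 : ℕ) : ℤ) := by
    rw [Int.natCast_dvd_natCast]
    intro hdvd
    have h1 : p ∣ L := (Nat.Prime.dvd_of_dvd_pow (Fact.out)) hdvd
    have := (Nat.Prime.dvd_factorial (Fact.out)).mp h1
    omega
  have hnormN : ‖((N : ℚ) : ℚ_[p])‖ ≤ (p : ℝ) ^ (-1 : ℤ) := by
    have h1 : ((p : ℤ) ^ (1 : ℕ)) ∣ ((N : ℕ) : ℤ) := by
      simpa using Int.natCast_dvd_natCast.mpr hpdvdN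
    have h2 := (Padic.norm_int_le_pow_iff_dvd ((N : ℕ) : ℤ) 1).mpr h1
    have h3 : (((N : ℕ) : ℤ) : ℚ_[p]) = ((N : ℚ) : ℚ_[p]) := by push_cast; ring
    rw [h3] at h2
    simpa using h2
  have hnormL : ‖(((L : ℚ) ^ 2 : ℚ) : ℚ_[p])‖ = 1 := by
    have hcast : (((L : ℚ) ^ 2 : ℚ) : ℚ_[p]) = (((L ^ 2 : ℕ) : ℤ) : ℚ_[p]) := by
      push_cast; ring
    rw [hcast]
    refine le_antisymm (Padic.norm_int_le_one _) ?_
    by_contra hlt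
    push_neg at hlt
    exact hLne (Padic.norm_intCast_lt_one_iff.mp hlt)
  have hcastQD : ((Q : ℚ) : ℚ_[p]) * (((L : ℚ) ^ 2 : ℚ) : ℚ_[p]) = ((N : ℚ) : ℚ_[p]) := by
    rw [← Rat.cast_mul, hQD]
  calc ‖((Q : ℚ) : ℚ_[p])‖
      = ‖((Q : ℚ) : ℚ_[p])‖ * ‖(((L : ℚ) ^ 2 : ℚ) : ℚ_[p])‖ := by rw [hnormL, mul_one]
    _ = ‖((Q : ℚ) : ℚ_[p]) * (((L : ℚ) ^ 2 : ℚ) : ℚ_[p])‖ := (norm_mul _ _).symm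
    _ = ‖((N : ℚ) : ℚ_[p])‖ := by rw [hcastQD]
    _ ≤ (p : ℝ) ^ (-1 : ℤ) := hnormN
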